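/- Let γ > 0 and let G be an n × n complex matrix with ‖G‖₂ ≥ 1/γ. Then there exists an n × n complex matrix Δ with ‖Δ‖₂ ≤ γ such that I + GΔ is singular. -/

import Mathlib

/-- The operator 2-norm (largest singular value) of a complex matrix. -/
noncomputable def opNorm2 {n : ℕ} (M : Matrix (Fin n) (Fin n) ℂ) : ℝ :=
  ‖LinearMap.toContinuousLinearMap (Matrix.toEuclideanLin M)‖

theorem small_gain_necessity {n : ℕ} (γ : ℝ) (hγ : 0 < γ)
    (G : Matrix (Fin n) (Fin n) ℂ) (hG : 1 / γ ≤ opNorm2 G) :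
    ∃ Δ : Matrix (Fin n) (Fin n) ℂ, opNorm2 Δ ≤ γ ∧ ¬ IsUnit (1 + G * Δ) := by
  classical
  set T := LinearMap.toContinuousLinearMap (Matrix.toEuclideanLin G) with hT
  have hγ' : (0:ℝ) < 1 / γ := by positivity
  have hTpos : 0 < ‖T‖ := lt_of_lt_of_le hγ' hG
  rcases Nat.eq_zero_or_pos n with hn | hn
  · exfalso
    subst hn
    have : T = 0 := Subsingleton.elim _ _
    rw [this, norm_zero] at hTpos
    exact lt_irrefl _ hTpos
  haveI : Nonempty (Fin n) := ⟨⟨0, hn⟩⟩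
  haveI : Nontrivial (EuclideanSpace ℂ (Fin n)) := by
    have : (EuclideanSpace.single (⟨0, hn⟩ : Fin n) (1:ℂ)) ≠ 0 := by
      intro h
      have := congrFun (congrArg (fun v : EuclideanSpace ℂ (Fin n) => (v : Fin n → ℂ)) h) ⟨0, hn⟩
      simp at this
    exact ⟨_, _, this⟩
  -- norm attaining vector
  obtain ⟨x, hx1, hxmax⟩ := (isCompact_sphere (0 : EuclideanSpace ℂ (Fin n)) 1).exists_isMaxOn
    (NormedSpace.sphere_nonempty.2 zero_le_one)
    ((continuous_norm.comp T.continuous).continuousOn)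
  have hxnorm : ‖x‖ = 1 := mem_sphere_zero_iff_norm.mp hx1
  have hTle : ‖T‖ ≤ ‖T x‖ := by
    apply ContinuousLinearMap.opNorm_le_bound' _ (norm_nonneg _)
    intro v hv
    have hu : ((‖v‖:ℂ)⁻¹ • v) ∈ Metric.sphere (0:EuclideanSpace ℂ (Fin n)) 1 := by
      rw [mem_sphere_zero_iff_norm, norm_smul]
      simp [hv, inv_mul_cancel₀ hv]
    have h2 : ‖T ((‖v‖:ℂ)⁻¹ • v)‖ ≤ ‖T x‖ := hxmax hu
    rw [map_smul, norm_smul] at h2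
    simp only [norm_inv, Complex.norm_real, Real.norm_eq_abs,
      abs_of_nonneg (norm_nonneg v)] at h2
    calc ‖T v‖ = ‖v‖ * (‖v‖⁻¹ * ‖T v‖) := by
          field_simp
        _ ≤ ‖v‖ * ‖T x‖ := by
          apply mul_le_mul_of_nonneg_left h2 (norm_nonneg v)
        _ = ‖T x‖ * ‖v‖ := mul_comm _ _
  set y : EuclideanSpace ℂ (Fin n) := T x with hy
  have hynorm : 1 / γ ≤ ‖y‖ := le_trans hG hTle
  have hypos : 0 < ‖y‖ := lt_of_lt_of_le hγ' hynorm
  have hy0 : y ≠ 0 := norm_ne_zero_iff.mp (ne_of_gt hypos)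
  -- the perturbation
  set Δ : Matrix (Fin n) (Fin n) ℂ :=
    Matrix.of (fun i j => -(x i) * (starRingEnd ℂ) (y j) / ((‖y‖:ℂ)^2)) with hΔ
  -- key computation: Δ *ᵥ v = -(⟪y, v⟫ / ‖y‖²) • x (as coordinate functions)
  have key : ∀ v : EuclideanSpace ℂ (Fin n),
      (Δ.mulVec (fun j => v j)) = fun i => (-(inner ℂ y v / ((‖y‖:ℂ)^2)) : ℂ) * x i := by
    intro v
    funext i
    simp only [Matrix.mulVec, dotProduct, hΔ, Matrix.of_apply]
    rw [PiLp.inner_apply]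
    simp only [RCLike.inner_apply]
    rw [neg_mul, div_mul_eq_mul_div, Finset.sum_mul, Finset.sum_div, ← Finset.sum_neg_distrib]
    exact Finset.sum_congr rfl fun j _ => by ring
  have keyE : ∀ v : EuclideanSpace ℂ (Fin n),
      (Matrix.toEuclideanLin Δ) v = (-(inner ℂ y v / ((‖y‖:ℂ)^2)) : ℂ) • x := by
    intro v
    apply PiLp.ext
    intro i
    have := congrFun (key v) i
    simpa [Matrix.toEuclideanLin_apply] using this
  have hyy : (inner ℂ y y : ℂ) = ((‖y‖:ℂ)^2) := by
    rw [inner_self_eq_norm_sq_to_K]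
    norm_cast
  refine ⟨Δ, ?_, ?_⟩
  · -- norm bound
    apply ContinuousLinearMap.opNorm_le_bound _ (le_of_lt hγ)
    intro v
    rw [show (LinearMap.toContinuousLinearMap (Matrix.toEuclideanLin Δ)) v
        = (Matrix.toEuclideanLin Δ) v from rfl, keyE v, norm_smul, hxnorm, mul_one]
    have hinner : ‖(inner ℂ y v : ℂ)‖ ≤ ‖y‖ * ‖v‖ := norm_inner_le_norm y v
    have h1 : ‖(-(inner ℂ y v / ((‖y‖:ℂ)^2)) : ℂ)‖ = ‖(inner ℂ y v : ℂ)‖ / ‖y‖^2 := by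
      rw [norm_neg, norm_div]
      congr 1
      rw [norm_pow, Complex.norm_real, Real.norm_eq_abs, abs_of_nonneg (norm_nonneg y)]
    rw [h1]
    rw [div_le_iff₀ (by positivity)]
    calc ‖(inner ℂ y v : ℂ)‖ ≤ ‖y‖ * ‖v‖ := hinner
      _ ≤ γ * ‖v‖ * ‖y‖^2 := by
          have h2 : 1 ≤ γ * ‖y‖ := by
            rw [div_le_iff₀ hγ] at hynorm
            linarith [hynorm]
          calc ‖y‖ * ‖v‖ = 1 * (‖y‖ * ‖v‖) := (one_mul _).symm
            _ ≤ (γ * ‖y‖) * (‖y‖ * ‖v‖) := by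
                apply mul_le_mul_of_nonneg_right h2 (by positivity)
            _ = γ * ‖v‖ * ‖y‖^2 := by ring
  · -- singularity
    intro hu
    have hdet : IsUnit (1 + G * Δ).det := (Matrix.isUnit_iff_isUnit_det _).mp hu
    have hΔy : Δ.mulVec (fun j => y j) = fun i => -(x i) := by
      rw [key y]
      funext i
      rw [hyy]
      have : ((‖y‖:ℂ)^2) ≠ 0 :=
        pow_ne_zero _ (by exact_mod_cast ne_of_gt hypos)
      field_simp
      rw [mul_div_cancel_left₀ _ (by exact_mod_cast ne_of_gt hypos : ((‖y‖:ℂ)) ≠ 0)]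
    have hGx : G.mulVec (fun j => x j) = fun i => y i := by
      funext i
      have : y = Matrix.toEuclideanLin G x := rfl
      rw [this]
      simp [Matrix.toEuclideanLin_apply]
    have hmv : (1 + G * Δ).mulVec (fun j => y j) = 0 := by
      rw [Matrix.add_mulVec, Matrix.one_mulVec, ← Matrix.mulVec_mulVec, hΔy]
      funext i
      have : G.mulVec (fun i => -(x i)) = fun i => -(y i) := by
        have : (fun i => -(x i)) = (-1 : ℂ) • (fun j => x j) := by funext i; simp
        rw [this, Matrix.mulVec_smul, hGx]
        funext i; simp
      rw [this]
      simp
    have hyfun : (fun j => y j) ≠ (0 : Fin n → ℂ) := by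
      intro h
      apply hy0
      apply PiLp.ext
      intro i
      exact congrFun h i
    have : (1 + G * Δ).det = 0 :=
      Matrix.exists_mulVec_eq_zero_iff.mp ⟨_, hyfun, hmv⟩
    rw [this] at hdet
    exact (not_isUnit_zero hdet : False)
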